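/- For a finite group G, the pullback functor along the algebra isomorphism λ (λ(g)=g, λ(δ_g)=δ_g⁰+δ_{gz}¹) sends a D(G)-module V to a module Λ(V) which equals V as a G-module but has G-grading Λ(V)_g = V_g⁰ ⊕ V_{gz}¹, and Λ is an equivalence of categories from D(G)-mod to itself satisfying Λ(V ⊗_z W) ≅ Λ(V) ⊗̄ Λ(W) naturally, where ⊗_z is the z-twisted fiberwise tensor product (V⊗_z W)_g = ⊕_{σ,τ∈Z/2} V^σ_{gz^τ} ⊗ W^τ_{gz^σ} and ⊗̄ is the fiberwise tensor product (V⊗̄W)_g = V_g ⊗ W_g. -/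

import Mathlib

/-!
STATEMENT 17: For a finite group `G` with central `z`, `z² = e`, the pullback
functor `Λ` along the algebra isomorphism `λ` (`λ(g) = g`,
`λ(δ_g) = δ_g⁰ + δ_{gz}¹`) sends a `D(G)`-module `V` to a module `Λ(V)` which
equals `V` as a `G`-module but has `G`-grading `Λ(V)_g = V_g⁰ ⊕ V_{gz}¹`, and
`Λ` is an equivalence of categories from `D(G)`-mod to itself satisfying
`Λ(V ⊗_z W) ≅ Λ(V) ⊗̄ Λ(W)` naturally, where `⊗_z` is the `z`-twisted
fiberwise tensor product `(V ⊗_z W)_g = ⊕_{σ,τ} V^σ_{gz^τ} ⊗ W^τ_{gz^σ}`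
and `⊗̄` is the fiberwise tensor product `(V ⊗̄ W)_g = V_g ⊗ W_g`.

`D(G)`-modules are modeled as `G`-equivariant bundles over `G`: a `k`-module
with `G`-action `ρ` and complete orthogonal fiber projections `π g`.  The
even/odd parts `V^σ` are cut out by the parity projections
`p^σ = (1 + (−1)^σ ρ(z))/2`.  `Λ(V)` keeps the same action and has the fiber
projections `Λπ_g = π_g ∘ p⁰ + π_{gz} ∘ p¹`.  The theorem asserts:
(a) `Λ(V)` is again a bundle (with the same `G`-action), so `Λ` is a
well-defined functor; (b) `Λ(V)_g = V_g⁰ ⊕ V_{gz}¹`; (c) `Λ ∘ Λ = id` on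
fiber projections, so `Λ` is an equivalence (an involution); (d) the fiber
projections of `Λ(V ⊗_z W)` and of `Λ(V) ⊗̄ Λ(W)` on `V.M ⊗ W.M` coincide,
giving the natural isomorphism `Λ(V ⊗_z W) ≅ Λ(V) ⊗̄ Λ(W)` (as the identity).
Both tensor products carry the diagonal `G`-action.
-/

open TensorProduct

/-- A `G`-equivariant vector bundle over `G`, i.e. a `D(G)`-module. -/
structure GEqBundle (k G : Type) [Field k] [Group G] [Fintype G] where
  M : Type
  [acg : AddCommGroup M]
  [mod : Module k M]
  ρ : G → (M →ₗ[k] M)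
  ρ_one : ρ 1 = LinearMap.id
  ρ_mul : ∀ g h : G, ρ (g * h) = ρ g ∘ₗ ρ h
  π : G → (M →ₗ[k] M)
  π_idem : ∀ g, π g ∘ₗ π g = π g
  π_orth : ∀ g h, g ≠ h → π g ∘ₗ π h = 0
  π_total : ∑ g : G, π g = LinearMap.id
  compat : ∀ h g, ρ h ∘ₗ π g = π (h * g * h⁻¹) ∘ₗ ρ h

attribute [instance] GEqBundle.acg GEqBundle.mod

section

variable (k : Type) [Field k]

/-- The parity projection `(1 + (−1)^σ a)/2` associated to an involution `a`
(the action of the central element `z`). -/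
noncomputable def parityProj {M : Type} [AddCommGroup M] [Module k M]
    (a : M →ₗ[k] M) (σ : Bool) : M →ₗ[k] M :=
  (2 : k)⁻¹ • (LinearMap.id + (if σ then (-1 : k) else (1 : k)) • a)

/-- The `Λ`-twisted family of fiber projections:
`Λπ_g = π_g ∘ p⁰ + π_{gz} ∘ p¹`, where `p^σ` are the parity projections of the
`z`-action `a`. -/
noncomputable def lamAux {G M : Type} [Group G] [AddCommGroup M] [Module k M]
    (a : M →ₗ[k] M) (πf : G → (M →ₗ[k] M)) (z g : G) : M →ₗ[k] M :=
  πf g ∘ₗ parityProj k a false + πf (g * z) ∘ₗ parityProj k a true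

/-- `z^σ` for `σ ∈ Z/2`. -/
def zpow2 {G : Type} [Group G] (z : G) (σ : Bool) : G := if σ then z else 1

end

/-- The fiber projections of the `z`-twisted fiberwise tensor product
`(V ⊗_z W)_g = ⊕_{σ,τ} V^σ_{gz^τ} ⊗ W^τ_{gz^σ}` on the ambient space
`V.M ⊗ W.M`. -/
noncomputable def twistPi (k G : Type) [Field k] [Group G] [Fintype G]
    (z : G) (V W : GEqBundle k G) (g : G) :
    (V.M ⊗[k] W.M) →ₗ[k] (V.M ⊗[k] W.M) :=
  ∑ σ : Bool, ∑ τ : Bool,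
    TensorProduct.map (V.π (g * zpow2 z τ) ∘ₗ parityProj k (V.ρ z) σ)
      (W.π (g * zpow2 z σ) ∘ₗ parityProj k (W.ρ z) τ)

section Helpers

variable {k : Type} [Field k] [CharZero k] {M N : Type}
  [AddCommGroup M] [Module k M] [AddCommGroup N] [Module k N]

lemma parityProj_comp (a : M →ₗ[k] M) (ha : a ∘ₗ a = LinearMap.id) (σ τ : Bool) :
    parityProj k a σ ∘ₗ parityProj k a τ =
      if σ = τ then parityProj k a σ else 0 := by
  have ha' : ∀ x, a (a x) = x := fun x => congrFun (congrArg DFunLike.coe ha) x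
  cases σ <;> cases τ <;>
    · ext x
      simp [parityProj, ha' x, smul_add, smul_smul]
      all_goals field_simp
      all_goals module

lemma parityProj_sum (a : M →ₗ[k] M) :
    parityProj k a false + parityProj k a true = LinearMap.id := by
  ext x
  simp [parityProj, smul_add, smul_smul]
  module

lemma parityProj_comm {a f : M →ₗ[k] M} (hf : f ∘ₗ a = a ∘ₗ f) (σ : Bool) :
    f ∘ₗ parityProj k a σ = parityProj k a σ ∘ₗ f := by
  have hf' : ∀ x, f (a x) = a (f x) := fun x => congrFun (congrArg DFunLike.coe hf) x
  cases σ <;>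
    · ext x
      simp [parityProj, hf' x]

lemma range_comp_idem {f g : M →ₗ[k] M} (hf : f ∘ₗ f = f) (hg : g ∘ₗ g = g)
    (hcomm : f ∘ₗ g = g ∘ₗ f) :
    LinearMap.range (f ∘ₗ g) = LinearMap.range f ⊓ LinearMap.range g := by
  have hf' : ∀ x, f (f x) = f x := fun x => congrFun (congrArg DFunLike.coe hf) x
  have hg' : ∀ x, g (g x) = g x := fun x => congrFun (congrArg DFunLike.coe hg) x
  have hc' : ∀ x, f (g x) = g (f x) := fun x => congrFun (congrArg DFunLike.coe hcomm) x
  apply le_antisymm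
  · rintro _ ⟨y, rfl⟩
    exact ⟨⟨g y, rfl⟩, ⟨f y, (hc' y).symm⟩⟩
  · rintro x ⟨⟨u, rfl⟩, ⟨v, hv⟩⟩
    refine ⟨f u, ?_⟩
    simp only [LinearMap.comp_apply]
    rw [← hv, hg' v, hv, hf' u]

lemma range_add_orth {f g : M →ₗ[k] M} (hf : f ∘ₗ f = f) (hg : g ∘ₗ g = g)
    (hfg : f ∘ₗ g = 0) (hgf : g ∘ₗ f = 0) :
    LinearMap.range (f + g) = LinearMap.range f ⊔ LinearMap.range g := by
  have hf' : ∀ x, f (f x) = f x := fun x => congrFun (congrArg DFunLike.coe hf) x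
  have hg' : ∀ x, g (g x) = g x := fun x => congrFun (congrArg DFunLike.coe hg) x
  have hfg' : ∀ x, f (g x) = 0 := fun x => congrFun (congrArg DFunLike.coe hfg) x
  have hgf' : ∀ x, g (f x) = 0 := fun x => congrFun (congrArg DFunLike.coe hgf) x
  apply le_antisymm
  · rintro _ ⟨y, rfl⟩
    exact Submodule.add_mem_sup ⟨y, rfl⟩ ⟨y, rfl⟩
  · rw [sup_le_iff]
    constructor
    · rintro _ ⟨y, rfl⟩
      exact ⟨f y, by simp [hf' y, hgf' y]⟩
    · rintro _ ⟨y, rfl⟩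
      exact ⟨g y, by simp [hg' y, hfg' y]⟩

lemma parityProj_map_false (a : M →ₗ[k] M) (b : N →ₗ[k] N) :
    parityProj k (TensorProduct.map a b) false =
      TensorProduct.map (parityProj k a false) (parityProj k b false)
        + TensorProduct.map (parityProj k a true) (parityProj k b true) := by
  apply TensorProduct.ext'
  intro x y
  simp [parityProj, TensorProduct.tmul_add, TensorProduct.add_tmul,
    TensorProduct.smul_tmul', TensorProduct.tmul_smul, TensorProduct.tmul_neg,
    TensorProduct.neg_tmul, smul_add, smul_smul]
  simp only [← TensorProduct.smul_tmul', TensorProduct.tmul_smul, smul_smul]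
  module

lemma parityProj_map_true (a : M →ₗ[k] M) (b : N →ₗ[k] N) :
    parityProj k (TensorProduct.map a b) true =
      TensorProduct.map (parityProj k a false) (parityProj k b true)
        + TensorProduct.map (parityProj k a true) (parityProj k b false) := by
  apply TensorProduct.ext'
  intro x y
  simp [parityProj, TensorProduct.tmul_add, TensorProduct.add_tmul,
    TensorProduct.smul_tmul', TensorProduct.tmul_smul, TensorProduct.tmul_neg,
    TensorProduct.neg_tmul, smul_add, smul_smul]
  simp only [← TensorProduct.smul_tmul', TensorProduct.tmul_smul, smul_smul]
  module

end Helpers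

section BundleHelpers

variable {k G : Type} [Field k] [CharZero k] [Group G] [Fintype G]
  {z : G} (V : GEqBundle k G)

lemma rho_z_sq (hz2 : z * z = 1) : V.ρ z ∘ₗ V.ρ z = LinearMap.id := by
  rw [← V.ρ_mul, hz2, V.ρ_one]

lemma rho_pi_comm (hzc : ∀ a : G, z * a = a * z) (g : G) :
    V.π g ∘ₗ V.ρ z = V.ρ z ∘ₗ V.π g := by
  rw [V.compat z g, hzc g, mul_inv_cancel_right]

lemma pi_parity_comm (hzc : ∀ a : G, z * a = a * z) (g : G) (σ : Bool) :
    V.π g ∘ₗ parityProj k (V.ρ z) σ = parityProj k (V.ρ z) σ ∘ₗ V.π g :=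
  parityProj_comm (rho_pi_comm V hzc g) σ

lemma rho_parity_comm (hzc : ∀ a : G, z * a = a * z) (h : G) (σ : Bool) :
    V.ρ h ∘ₗ parityProj k (V.ρ z) σ = parityProj k (V.ρ z) σ ∘ₗ V.ρ h := by
  refine parityProj_comm ?_ σ
  rw [← V.ρ_mul, ← V.ρ_mul, hzc h]

open scoped Classical in
/-- Key composition rule for the building blocks `π x ∘ p^σ`. -/
lemma key_comp (hzc : ∀ a : G, z * a = a * z) (hz2 : z * z = 1)
    (x y : G) (σ τ : Bool) :
    (V.π x ∘ₗ parityProj k (V.ρ z) σ) ∘ₗ (V.π y ∘ₗ parityProj k (V.ρ z) τ)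
      = if x = y ∧ σ = τ then V.π x ∘ₗ parityProj k (V.ρ z) σ else 0 := by
  have step : (V.π x ∘ₗ parityProj k (V.ρ z) σ) ∘ₗ (V.π y ∘ₗ parityProj k (V.ρ z) τ)
      = (V.π x ∘ₗ V.π y) ∘ₗ (parityProj k (V.ρ z) σ ∘ₗ parityProj k (V.ρ z) τ) := by
    calc (V.π x ∘ₗ parityProj k (V.ρ z) σ) ∘ₗ (V.π y ∘ₗ parityProj k (V.ρ z) τ)
        = V.π x ∘ₗ ((parityProj k (V.ρ z) σ ∘ₗ V.π y) ∘ₗ parityProj k (V.ρ z) τ) := by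
          simp only [LinearMap.comp_assoc]
      _ = V.π x ∘ₗ ((V.π y ∘ₗ parityProj k (V.ρ z) σ) ∘ₗ parityProj k (V.ρ z) τ) := by
          rw [pi_parity_comm V hzc y σ]
      _ = (V.π x ∘ₗ V.π y) ∘ₗ (parityProj k (V.ρ z) σ ∘ₗ parityProj k (V.ρ z) τ) := by
          simp only [LinearMap.comp_assoc]
  rw [step, parityProj_comp (V.ρ z) (rho_z_sq V hz2) σ τ]
  by_cases hxy : x = y
  · subst hxy
    by_cases hστ : σ = τ
    · simp [hστ, V.π_idem]
    · simp [hστ]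
  · by_cases hστ : σ = τ <;> simp [hxy, hστ, V.π_orth x y hxy]

end BundleHelpers


/-- `Λ(V)` is a bundle with grading `Λ(V)_g = V_g⁰ ⊕ V_{gz}¹`, `Λ` is an
involutive equivalence, and `Λ(V ⊗_z W) ≅ Λ(V) ⊗̄ Λ(W)` (the fiber
projections agree on the nose). -/
theorem lambda_pullback_equivalence (k G : Type) [Field k] [CharZero k]
    [Group G] [Fintype G] (z : G) (hzc : ∀ a : G, z * a = a * z)
    (hz2 : z * z = 1) (V W : GEqBundle k G) :
    -- (a) `Λ(V)` (same `G`-action, fiber projections `Λπ`) is again a bundle: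
    (∀ g : G, lamAux k (V.ρ z) V.π z g ∘ₗ lamAux k (V.ρ z) V.π z g
      = lamAux k (V.ρ z) V.π z g) ∧
    (∀ g h : G, g ≠ h →
      lamAux k (V.ρ z) V.π z g ∘ₗ lamAux k (V.ρ z) V.π z h = 0) ∧
    (∑ g : G, lamAux k (V.ρ z) V.π z g = LinearMap.id) ∧
    (∀ h g : G, V.ρ h ∘ₗ lamAux k (V.ρ z) V.π z g
      = lamAux k (V.ρ z) V.π z (h * g * h⁻¹) ∘ₗ V.ρ h) ∧
    -- (b) the new grading is `Λ(V)_g = V_g⁰ ⊕ V_{gz}¹`: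
    (∀ g : G, LinearMap.range (lamAux k (V.ρ z) V.π z g)
      = (LinearMap.range (V.π g) ⊓ LinearMap.range (parityProj k (V.ρ z) false))
        ⊔ (LinearMap.range (V.π (g * z)) ⊓ LinearMap.range (parityProj k (V.ρ z) true))) ∧
    -- (c) `Λ` is involutive, hence an equivalence of `D(G)`-mod with itself:
    (∀ g : G, lamAux k (V.ρ z) (fun a => lamAux k (V.ρ z) V.π z a) z g = V.π g) ∧
    -- (d) `Λ(V ⊗_z W) = Λ(V) ⊗̄ Λ(W)`: the fiber projections agree:
    (∀ g : G,
      lamAux k (TensorProduct.map (V.ρ z) (W.ρ z)) (twistPi k G z V W) z g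
        = TensorProduct.map (lamAux k (V.ρ z) V.π z g) (lamAux k (W.ρ z) W.π z g)) := by
  have keyV := key_comp V hzc hz2
  have keyW := key_comp W hzc hz2
  have hgzz : ∀ g : G, g * z * z = g := fun g => by rw [mul_assoc, hz2, mul_one]
  refine ⟨?_, ?_, ?_, ?_, ?_, ?_, ?_⟩
  · -- (a) idempotency
    intro g
    simp only [lamAux, LinearMap.add_comp, LinearMap.comp_add, keyV]
    simp
  · -- (a) orthogonality
    intro g h hgh
    have hgh' : g * z ≠ h * z := fun hc => hgh (mul_right_cancel hc)
    simp only [lamAux, LinearMap.add_comp, LinearMap.comp_add, keyV]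
    simp [hgh, hgh']
  · -- (a) totality
    have sumcomp : ∀ σ : Bool,
        ∑ g : G, V.π g ∘ₗ parityProj k (V.ρ z) σ
          = LinearMap.id ∘ₗ parityProj k (V.ρ z) σ := by
      intro σ
      rw [← V.π_total]
      ext x
      simp [LinearMap.sum_apply]
    have reidx : ∑ g : G, V.π (g * z) ∘ₗ parityProj k (V.ρ z) true
        = ∑ g : G, V.π g ∘ₗ parityProj k (V.ρ z) true :=
      Fintype.sum_equiv (Equiv.mulRight z) _ _ (fun g => by simp)
    calc ∑ g : G, lamAux k (V.ρ z) V.π z g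
        = (∑ g : G, V.π g ∘ₗ parityProj k (V.ρ z) false)
          + ∑ g : G, V.π (g * z) ∘ₗ parityProj k (V.ρ z) true := by
          simp [lamAux, Finset.sum_add_distrib]
      _ = LinearMap.id ∘ₗ parityProj k (V.ρ z) false
          + LinearMap.id ∘ₗ parityProj k (V.ρ z) true := by
          rw [reidx, sumcomp false, sumcomp true]
      _ = LinearMap.id := by
          rw [LinearMap.id_comp, LinearMap.id_comp, parityProj_sum]
  · -- (a) equivariance
    intro h g
    have hmul : h * (g * z) * h⁻¹ = h * g * h⁻¹ * z := by
      rw [show h * (g * z) * h⁻¹ = h * g * (z * h⁻¹) by group, hzc h⁻¹]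
      group
    simp only [lamAux, LinearMap.comp_add, ← LinearMap.comp_assoc, V.compat, hmul]
    rw [LinearMap.comp_assoc, LinearMap.comp_assoc,
      rho_parity_comm V hzc h false, rho_parity_comm V hzc h true,
      ← LinearMap.comp_assoc, ← LinearMap.comp_assoc, LinearMap.add_comp]
  · -- (b) the grading
    intro g
    have hA : (V.π g ∘ₗ parityProj k (V.ρ z) false) ∘ₗ (V.π g ∘ₗ parityProj k (V.ρ z) false)
        = V.π g ∘ₗ parityProj k (V.ρ z) false := by rw [keyV]; simp
    have hB : (V.π (g * z) ∘ₗ parityProj k (V.ρ z) true) ∘ₗ (V.π (g * z) ∘ₗ parityProj k (V.ρ z) true)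
        = V.π (g * z) ∘ₗ parityProj k (V.ρ z) true := by rw [keyV]; simp
    have hAB : (V.π g ∘ₗ parityProj k (V.ρ z) false) ∘ₗ (V.π (g * z) ∘ₗ parityProj k (V.ρ z) true)
        = 0 := by rw [keyV]; simp
    have hBA : (V.π (g * z) ∘ₗ parityProj k (V.ρ z) true) ∘ₗ (V.π g ∘ₗ parityProj k (V.ρ z) false)
        = 0 := by rw [keyV]; simp
    have pf : parityProj k (V.ρ z) false ∘ₗ parityProj k (V.ρ z) false
        = parityProj k (V.ρ z) false := by
      simpa using parityProj_comp (V.ρ z) (rho_z_sq V hz2) false false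
    have pt : parityProj k (V.ρ z) true ∘ₗ parityProj k (V.ρ z) true
        = parityProj k (V.ρ z) true := by
      simpa using parityProj_comp (V.ρ z) (rho_z_sq V hz2) true true
    rw [lamAux, range_add_orth hA hB hAB hBA,
      range_comp_idem (V.π_idem g) pf (pi_parity_comm V hzc g false),
      range_comp_idem (V.π_idem (g * z)) pt (pi_parity_comm V hzc (g * z) true)]
  · -- (c) involutivity
    intro g
    have pp := parityProj_comp (V.ρ z) (rho_z_sq V hz2)
    simp only [lamAux, LinearMap.add_comp, LinearMap.comp_assoc, pp]
    simp [hgzz]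
    rw [← LinearMap.comp_add, parityProj_sum, LinearMap.comp_id]
  · -- (d) tensor compatibility
    intro g
    have ppV := parityProj_comp (V.ρ z) (rho_z_sq V hz2)
    have ppW := parityProj_comp (W.ρ z) (rho_z_sq W hz2)
    have keycV : ∀ (x : G) (σ α : Bool),
        (V.π x ∘ₗ parityProj k (V.ρ z) σ) ∘ₗ parityProj k (V.ρ z) α
          = if σ = α then V.π x ∘ₗ parityProj k (V.ρ z) σ else 0 := by
      intro x σ α
      rw [LinearMap.comp_assoc, ppV]
      by_cases h : σ = α <;> simp [h]
    have keycW : ∀ (x : G) (σ α : Bool),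
        (W.π x ∘ₗ parityProj k (W.ρ z) σ) ∘ₗ parityProj k (W.ρ z) α
          = if σ = α then W.π x ∘ₗ parityProj k (W.ρ z) σ else 0 := by
      intro x σ α
      rw [LinearMap.comp_assoc, ppW]
      by_cases h : σ = α <;> simp [h]
    rw [lamAux, parityProj_map_false, parityProj_map_true]
    simp only [twistPi, Fintype.sum_bool, zpow2, if_pos, if_neg, ite_true, ite_false,
      mul_one, hgzz]
    simp only [LinearMap.add_comp, LinearMap.comp_add, ← TensorProduct.map_comp,
      keycV, keycW]
    simp only [ite_true, ite_false, Bool.true_eq_false, Bool.false_eq_true,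
      TensorProduct.map_zero_left, TensorProduct.map_zero_right]
    simp only [mul_one, hgzz]
    simp only [lamAux, TensorProduct.map_add_left, TensorProduct.map_add_right]
    abel
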